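/- Let p ≥ 2 and r ≥ 1 be integers and let G be the graph 𝒢(p,r,r) on n = p + 2r + 2 vertices. Then q₁(G) > d₁(G) + 2, where q₁(G) is the largest eigenvalue of the signless Laplacian Q(G) and d₁(G) is the maximum degree of G (here d₁(G) = p + r + 1). -/

import Mathlib

open Matrix

/-- The signless Laplacian matrix `Q(G) = D + A` of a simple graph, over `ℝ`. -/
def sLapMatrix {m : ℕ} (G : SimpleGraph (Fin m)) [DecidableRel G.Adj] :
    Matrix (Fin m) (Fin m) ℝ :=
  G.degMatrix ℝ + G.adjMatrix ℝ

/-- `q` lists the eigenvalues of `A` (with multiplicity) in non-increasing order. -/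
def IsEigSeq {m : ℕ} (A : Matrix (Fin m) (Fin m) ℝ) (q : Fin m → ℝ) : Prop :=
  Antitone q ∧ ∃ (hA : A.IsHermitian) (σ : Equiv.Perm (Fin m)),
    ∀ i, q i = hA.eigenvalues (σ i)

/-- `d` lists the degrees of `G` (with multiplicity) in non-increasing order. -/
def IsDegSeq {m : ℕ} (G : SimpleGraph (Fin m)) [DecidableRel G.Adj] (d : Fin m → ℕ) : Prop :=
  Antitone d ∧ ∃ σ : Equiv.Perm (Fin m), ∀ i, d i = G.degree (σ i)

/-- The graph `𝒢(p,r,s)` on `p + r + s + 2` vertices: the graph `ℋ(p,r,s)` plus the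
edge `{u, v} = {0, 1}`. -/
def GGraph (p r s : ℕ) : SimpleGraph (Fin (p + r + s + 2)) where
  Adj a b :=
    ((a.val = 0 ∧ b.val = 1) ∨ (b.val = 0 ∧ a.val = 1)) ∨
    (((a.val = 0 ∧ 2 ≤ b.val ∧ b.val < p + r + 2) ∨
      (a.val = 1 ∧ 2 ≤ b.val ∧ (b.val < p + 2 ∨ p + r + 2 ≤ b.val))) ∨
     ((b.val = 0 ∧ 2 ≤ a.val ∧ a.val < p + r + 2) ∨
      (b.val = 1 ∧ 2 ≤ a.val ∧ (a.val < p + 2 ∨ p + r + 2 ≤ a.val))))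
  symm := by constructor; intro a b h; tauto
  loopless := by
    constructor
    intro a h
    rcases h with (⟨h1, h2⟩ | ⟨h1, h2⟩) |
      ((⟨h1, h2, _⟩ | ⟨h1, h2, _⟩) | (⟨h1, h2, _⟩ | ⟨h1, h2, _⟩)) <;> omega

instance GGraph.adjDecidable (p r s : ℕ) : DecidableRel (GGraph p r s).Adj := fun a b =>
  inferInstanceAs (Decidable
    (((a.val = 0 ∧ b.val = 1) ∨ (b.val = 0 ∧ a.val = 1)) ∨
     (((a.val = 0 ∧ 2 ≤ b.val ∧ b.val < p + r + 2) ∨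
       (a.val = 1 ∧ 2 ≤ b.val ∧ (b.val < p + 2 ∨ p + r + 2 ≤ b.val))) ∨
      ((b.val = 0 ∧ 2 ≤ a.val ∧ a.val < p + r + 2) ∨
       (b.val = 1 ∧ 2 ≤ a.val ∧ (a.val < p + 2 ∨ p + r + 2 ≤ a.val))))))


open Finset

lemma GGraph_adj {p r s : ℕ} (a b : Fin (p + r + s + 2)) :
    (GGraph p r s).Adj a b ↔
    (((a.val = 0 ∧ b.val = 1) ∨ (b.val = 0 ∧ a.val = 1)) ∨
    (((a.val = 0 ∧ 2 ≤ b.val ∧ b.val < p + r + 2) ∨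
      (a.val = 1 ∧ 2 ≤ b.val ∧ (b.val < p + 2 ∨ p + r + 2 ≤ b.val))) ∨
     ((b.val = 0 ∧ 2 ≤ a.val ∧ a.val < p + r + 2) ∨
      (b.val = 1 ∧ 2 ≤ a.val ∧ (a.val < p + 2 ∨ p + r + 2 ≤ a.val))))) := Iff.rfl
noncomputable section

def gfun (p r : ℕ) : ℕ → ℝ :=
  fun k => if k < 2 then (p:ℝ)+r+1 else if k < p+2 then 2 else 1

def hfun (p r : ℕ) : ℕ → ℝ :=
  fun k =>
    if k < 2 then
      ((p:ℝ)+r+1)*(((p:ℝ)+r+1)+((p:ℝ)+r+1)) + p*(((p:ℝ)+r+1)*(((p:ℝ)+r+1)+2))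
        + r*(((p:ℝ)+r+1)*(((p:ℝ)+r+1)+1))
    else if k < p+2 then 2*(2+((p:ℝ)+r+1))+2*(2+((p:ℝ)+r+1))
    else 1*(1+((p:ℝ)+r+1))

lemma sum_filter_val {n : ℕ} (P : ℕ → Prop) [DecidablePred P] (f : ℕ → ℝ) :
    ∑ w ∈ Finset.univ.filter (fun w : Fin n => P w.val), f w.val
      = ∑ k ∈ (Finset.range n).filter P, f k := by
  rw [Finset.sum_filter, Finset.sum_filter]
  exact Fin.sum_univ_eq_sum_range (fun k => if P k then f k else 0) n

lemma sum_Ico_const (f : ℕ → ℝ) (a b : ℕ) (c : ℝ) (h : ∀ k, a ≤ k → k < b → f k = c) :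
    ∑ k ∈ Finset.Ico a b, f k = (b - a : ℕ) * c := by
  rw [Finset.sum_congr rfl (fun k hk => h k (Finset.mem_Ico.mp hk).1 (Finset.mem_Ico.mp hk).2),
    Finset.sum_const, Nat.card_Ico, nsmul_eq_mul]

lemma GGraph_inner_sum (p r : ℕ) (hp : 2 ≤ p) (hr : 1 ≤ r) (i : Fin (p+r+r+2)) :
    ∑ u ∈ (GGraph p r r).neighborFinset i,
        gfun p r i.val * (gfun p r i.val + gfun p r u.val)
      = hfun p r i.val := by
  set D : ℝ := (p:ℝ)+r+1 with hD
  rcases Nat.lt_or_ge i.val 2 with h2 | h2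
  · have hgi : gfun p r i.val = D := by simp only [gfun]; rw [if_pos (by omega)]
    have hout : hfun p r i.val
        = D*(D+D) + p*(D*(D+2)) + r*(D*(D+1)) := by
      simp only [hfun]; rw [if_pos (by omega)]
    rw [hout, hgi]
    rcases Nat.lt_or_ge i.val 1 with h1 | h1
    · -- i = 0
      have hN : (GGraph p r r).neighborFinset i
          = Finset.univ.filter (fun w : Fin (p+r+r+2) => 1 ≤ w.val ∧ w.val < p+r+2) := by
        ext w
        simp only [SimpleGraph.mem_neighborFinset, Finset.mem_filter, Finset.mem_univ, true_and,
          GGraph_adj]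
        omega
      rw [hN, sum_filter_val (fun k => 1 ≤ k ∧ k < p+r+2) (fun k => D * (D + gfun p r k))]
      have heq : (Finset.range (p+r+r+2)).filter (fun k => 1 ≤ k ∧ k < p+r+2)
          = Finset.Ico 1 (p+r+2) := by
        ext k; simp only [Finset.mem_filter, Finset.mem_range, Finset.mem_Ico]; omega
      rw [heq,
        ← Finset.sum_Ico_consecutive (fun k => D * (D + gfun p r k))
          (by omega : 1 ≤ 2) (by omega : 2 ≤ p+r+2),
        ← Finset.sum_Ico_consecutive (fun k => D * (D + gfun p r k))
          (by omega : 2 ≤ p+2) (by omega : p+2 ≤ p+r+2),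
        sum_Ico_const _ _ _ (D*(D+D))
          (by intro k hk1 hk2; simp only [gfun]; rw [if_pos (by omega : k < 2)]),
        sum_Ico_const _ _ _ (D*(D+2))
          (by intro k hk1 hk2; simp only [gfun]; rw [if_neg (by omega), if_pos (by omega)]),
        sum_Ico_const _ _ _ (D*(D+1))
          (by intro k hk1 hk2; simp only [gfun]; rw [if_neg (by omega), if_neg (by omega)])]
      have e1 : (2-1 : ℕ) = 1 := by omega
      have e2 : (p+2-2 : ℕ) = p := by omega
      have e3 : (p+r+2-(p+2) : ℕ) = r := by omega
      rw [e1, e2, e3]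
      push_cast
      ring
    · -- i = 1
      have hN : (GGraph p r r).neighborFinset i
          = Finset.univ.filter (fun w : Fin (p+r+r+2) =>
              w.val = 0 ∨ (2 ≤ w.val ∧ (w.val < p+2 ∨ p+r+2 ≤ w.val))) := by
        ext w
        simp only [SimpleGraph.mem_neighborFinset, Finset.mem_filter, Finset.mem_univ, true_and,
          GGraph_adj]
        omega
      rw [hN, sum_filter_val (fun k => k = 0 ∨ (2 ≤ k ∧ (k < p+2 ∨ p+r+2 ≤ k)))
        (fun k => D * (D + gfun p r k))]
      have heq : (Finset.range (p+r+r+2)).filter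
            (fun k => k = 0 ∨ (2 ≤ k ∧ (k < p+2 ∨ p+r+2 ≤ k)))
          = insert 0 (Finset.Ico 2 (p+2) ∪ Finset.Ico (p+r+2) (p+r+r+2)) := by
        ext k
        simp only [Finset.mem_filter, Finset.mem_range, Finset.mem_insert, Finset.mem_union,
          Finset.mem_Ico]
        omega
      have h0 : (0:ℕ) ∉ Finset.Ico 2 (p+2) ∪ Finset.Ico (p+r+2) (p+r+r+2) := by
        simp only [Finset.mem_union, Finset.mem_Ico]; omega
      have hdisj : Disjoint (Finset.Ico 2 (p+2)) (Finset.Ico (p+r+2) (p+r+r+2)) := by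
        rw [Finset.disjoint_left]
        intro k hk hk'
        simp only [Finset.mem_Ico] at hk hk'
        omega
      rw [heq, Finset.sum_insert h0, Finset.sum_union hdisj,
        sum_Ico_const _ _ _ (D*(D+2))
          (by intro k hk1 hk2; simp only [gfun]; rw [if_neg (by omega), if_pos (by omega)]),
        sum_Ico_const _ _ _ (D*(D+1))
          (by intro k hk1 hk2; simp only [gfun]; rw [if_neg (by omega), if_neg (by omega)])]
      have hg0 : gfun p r 0 = D := by simp only [gfun]; rw [if_pos (by omega)]
      rw [hg0]
      have e2 : (p+2-2 : ℕ) = p := by omega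
      have e3 : (p+r+r+2-(p+r+2) : ℕ) = r := by omega
      rw [e2, e3]
      ring
  · have hout : hfun p r i.val
        = if i.val < p+2 then 2*(2+D)+2*(2+D) else 1*(1+D) := by
      simp only [hfun]; rw [if_neg (by omega)]
    rcases Nat.lt_or_ge i.val (p+2) with hp2 | hp2
    · -- P vertex
      have hN : (GGraph p r r).neighborFinset i
          = {(⟨0, by omega⟩ : Fin (p+r+r+2)), ⟨1, by omega⟩} := by
        ext w
        simp only [SimpleGraph.mem_neighborFinset, Finset.mem_insert, Finset.mem_singleton,
          GGraph_adj, Fin.ext_iff, Fin.val_mk]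
        omega
      have hne : (⟨0, by omega⟩ : Fin (p+r+r+2)) ≠ ⟨1, by omega⟩ := by
        simp [Fin.ext_iff]
      rw [hN, Finset.sum_pair hne, hout, if_pos hp2]
      have hgi : gfun p r i.val = 2 := by
        simp only [gfun]; rw [if_neg (by omega), if_pos (by omega)]
      have hg0 : gfun p r (⟨0, by omega⟩ : Fin (p+r+r+2)).val = D := by
        show gfun p r 0 = D; simp only [gfun]; rw [if_pos (by omega : (0:ℕ) < 2)]
      have hg1 : gfun p r (⟨1, by omega⟩ : Fin (p+r+r+2)).val = D := by
        show gfun p r 1 = D; simp only [gfun]; rw [if_pos (by omega : (1:ℕ) < 2)]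
      rw [hgi, hg0, hg1]
    · rcases Nat.lt_or_ge i.val (p+r+2) with hpr | hpr
      · -- R vertex
        have hN : (GGraph p r r).neighborFinset i = {(⟨0, by omega⟩ : Fin (p+r+r+2))} := by
          ext w
          simp only [SimpleGraph.mem_neighborFinset, Finset.mem_singleton,
            GGraph_adj, Fin.ext_iff, Fin.val_mk]
          omega
        rw [hN, Finset.sum_singleton, hout, if_neg (by omega)]
        have hgi : gfun p r i.val = 1 := by
          simp only [gfun]; rw [if_neg (by omega), if_neg (by omega)]
        have hg0 : gfun p r (⟨0, by omega⟩ : Fin (p+r+r+2)).val = D := by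
          show gfun p r 0 = D; simp only [gfun]; rw [if_pos (by omega : (0:ℕ) < 2)]
        rw [hgi, hg0]
      · -- S vertex
        have hN : (GGraph p r r).neighborFinset i = {(⟨1, by omega⟩ : Fin (p+r+r+2))} := by
          ext w
          simp only [SimpleGraph.mem_neighborFinset, Finset.mem_singleton,
            GGraph_adj, Fin.ext_iff, Fin.val_mk]
          omega
        rw [hN, Finset.sum_singleton, hout, if_neg (by omega)]
        have hgi : gfun p r i.val = 1 := by
          simp only [gfun]; rw [if_neg (by omega), if_neg (by omega)]
        have hg1 : gfun p r (⟨1, by omega⟩ : Fin (p+r+r+2)).val = D := by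
          show gfun p r 1 = D; simp only [gfun]; rw [if_pos (by omega : (1:ℕ) < 2)]
        rw [hgi, hg1]

lemma card_filter_val {n : ℕ} (P : ℕ → Prop) [DecidablePred P] :
    (Finset.univ.filter (fun w : Fin n => P w.val)).card
      = ((Finset.range n).filter P).card := by
  rw [Finset.card_filter, Finset.card_filter]
  exact Fin.sum_univ_eq_sum_range (fun k => if P k then 1 else 0) n

lemma rayleigh_le {m : ℕ} {A : Matrix (Fin m) (Fin m) ℝ} (hA : A.IsHermitian) {c : ℝ}
    (hc : ∀ i, hA.eigenvalues i ≤ c) (x : Fin m → ℝ) :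
    x ⬝ᵥ (A *ᵥ x) ≤ c * (x ⬝ᵥ x) := by
  set U : Matrix (Fin m) (Fin m) ℝ := (hA.eigenvectorUnitary : Matrix (Fin m) (Fin m) ℝ)
  have hU : U * Uᴴ = 1 := by
    rw [← Matrix.star_eq_conjTranspose]
    exact (Matrix.mem_unitaryGroup_iff).mp hA.eigenvectorUnitary.2
  have h1 : c • (1 : Matrix (Fin m) (Fin m) ℝ) - A =
      U * Matrix.diagonal (fun i => c - hA.eigenvalues i) * Uᴴ := by
    have hd : Matrix.diagonal (fun i => c - hA.eigenvalues i)
        = c • (1 : Matrix (Fin m) (Fin m) ℝ) - Matrix.diagonal hA.eigenvalues := by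
      rw [Matrix.smul_one_eq_diagonal, ← Matrix.diagonal_sub]
    have hsp : A = U * Matrix.diagonal hA.eigenvalues * Uᴴ := by
      have := hA.spectral_theorem
      rw [Unitary.conjStarAlgAut_apply, RCLike.ofReal_real_eq_id, Function.id_comp] at this
      rw [← Matrix.star_eq_conjTranspose]
      convert this using 3
    rw [hd, Matrix.mul_sub, Matrix.sub_mul, ← hsp, Matrix.mul_smul, Matrix.mul_one,
      Matrix.smul_mul, hU]
  have hM : (c • (1 : Matrix (Fin m) (Fin m) ℝ) - A).PosSemidef := by
    rw [h1]
    exact (Matrix.posSemidef_diagonal_iff.mpr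
      fun i => sub_nonneg.2 (hc i)).mul_mul_conjTranspose_same U
  have h2 := hM.dotProduct_mulVec_nonneg x
  simp only [star_trivial, Matrix.sub_mulVec, Matrix.smul_mulVec, Matrix.one_mulVec,
    dotProduct_sub, dotProduct_smul, smul_eq_mul] at h2
  linarith

lemma GGraph_degree_le {p r : ℕ} (hp : 2 ≤ p) (hr : 1 ≤ r) (v : Fin (p + r + r + 2)) :
    (GGraph p r r).degree v ≤ p + r + 1 := by
  rw [SimpleGraph.degree, SimpleGraph.neighborFinset_eq_filter]
  rcases Nat.lt_or_ge v.val 2 with h2 | h2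
  · rcases Nat.lt_or_ge v.val 1 with h1 | h1
    · have hsub : Finset.univ.filter ((GGraph p r r).Adj v) ⊆
          Finset.univ.filter (fun w : Fin (p+r+r+2) => 1 ≤ w.val ∧ w.val < p + r + 2) := by
        intro w hw
        simp only [Finset.mem_filter, Finset.mem_univ, true_and] at hw ⊢
        rw [GGraph_adj] at hw; omega
      refine le_trans (Finset.card_le_card hsub) ?_
      rw [card_filter_val (fun k => 1 ≤ k ∧ k < p + r + 2)]
      have : ((Finset.range (p+r+r+2)).filter (fun k => 1 ≤ k ∧ k < p + r + 2))
          = Finset.Ico 1 (p + r + 2) := by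
        ext k; simp only [Finset.mem_filter, Finset.mem_range, Finset.mem_Ico]; omega
      rw [this, Nat.card_Ico]
      omega
    · have hsub : Finset.univ.filter ((GGraph p r r).Adj v) ⊆
          Finset.univ.filter (fun w : Fin (p+r+r+2) =>
            w.val = 0 ∨ (2 ≤ w.val ∧ (w.val < p + 2 ∨ p + r + 2 ≤ w.val))) := by
        intro w hw
        simp only [Finset.mem_filter, Finset.mem_univ, true_and] at hw ⊢
        rw [GGraph_adj] at hw; omega
      refine le_trans (Finset.card_le_card hsub) ?_
      rw [card_filter_val (fun k => k = 0 ∨ (2 ≤ k ∧ (k < p + 2 ∨ p + r + 2 ≤ k)))]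
      have heq : ((Finset.range (p+r+r+2)).filter
            (fun k => k = 0 ∨ (2 ≤ k ∧ (k < p + 2 ∨ p + r + 2 ≤ k))))
          = insert 0 (Finset.Ico 2 (p+2) ∪ Finset.Ico (p+r+2) (p+r+r+2)) := by
        ext k
        simp only [Finset.mem_filter, Finset.mem_range, Finset.mem_insert, Finset.mem_union,
          Finset.mem_Ico]
        omega
      have hdisj : Disjoint (Finset.Ico 2 (p+2)) (Finset.Ico (p+r+2) (p+r+r+2)) := by
        rw [Finset.disjoint_left]
        intro k hk hk'
        simp only [Finset.mem_Ico] at hk hk'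
        omega
      have h0 : (0:ℕ) ∉ Finset.Ico 2 (p+2) ∪ Finset.Ico (p+r+2) (p+r+r+2) := by
        simp only [Finset.mem_union, Finset.mem_Ico]; omega
      rw [heq, Finset.card_insert_of_notMem h0, Finset.card_union_of_disjoint hdisj,
        Nat.card_Ico, Nat.card_Ico]
      omega
  · have hsub : Finset.univ.filter ((GGraph p r r).Adj v) ⊆
        Finset.univ.filter (fun w : Fin (p+r+r+2) => w.val < 2) := by
      intro w hw
      simp only [Finset.mem_filter, Finset.mem_univ, true_and] at hw ⊢
      rw [GGraph_adj] at hw; omega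
    refine le_trans (Finset.card_le_card hsub) ?_
    rw [card_filter_val (fun k => k < 2)]
    have : ((Finset.range (p+r+r+2)).filter (fun k => k < 2)) = Finset.range 2 := by
      ext k; simp only [Finset.mem_filter, Finset.mem_range]; omega
    rw [this, Finset.card_range]; omega

lemma gfun_sq_sum (p r : ℕ) (hp : 2 ≤ p) (hr : 1 ≤ r) :
    ∑ k ∈ Finset.range (p+r+r+2), gfun p r k * gfun p r k
      = 2*((p:ℝ)+r+1)^2 + 4*p + 2*r := by
  set D : ℝ := (p:ℝ)+r+1 with hD
  rw [Finset.range_eq_Ico,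
    ← Finset.sum_Ico_consecutive (fun k => gfun p r k * gfun p r k)
      (by omega : 0 ≤ 2) (by omega : 2 ≤ p+r+r+2),
    ← Finset.sum_Ico_consecutive (fun k => gfun p r k * gfun p r k)
      (by omega : 2 ≤ p+2) (by omega : p+2 ≤ p+r+r+2),
    sum_Ico_const _ _ _ (D*D) (by intro k h1 h2; simp only [gfun]; rw [if_pos (by omega : k < 2)]),
    sum_Ico_const _ _ _ (2*2 : ℝ) (by intro k h1 h2; simp only [gfun]; rw [if_neg (by omega), if_pos (by omega)]),
    sum_Ico_const _ _ _ (1*1 : ℝ) (by intro k h1 h2; simp only [gfun]; rw [if_neg (by omega), if_neg (by omega)])]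
  have e1 : (2 - 0 : ℕ) = 2 := by omega
  have e2 : (p+2-2 : ℕ) = p := by omega
  have e3 : (p+r+r+2-(p+2) : ℕ) = r + r := by omega
  rw [e1, e2, e3]
  push_cast
  ring


lemma hfun_sum (p r : ℕ) (hp : 2 ≤ p) (hr : 1 ≤ r) :
    ∑ k ∈ Finset.range (p+r+r+2), hfun p r k
      = 2*(((p:ℝ)+r+1)*(((p:ℝ)+r+1)+((p:ℝ)+r+1)) + p*(((p:ℝ)+r+1)*(((p:ℝ)+r+1)+2))
          + r*(((p:ℝ)+r+1)*(((p:ℝ)+r+1)+1)))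
        + p*(2*(2+((p:ℝ)+r+1))+2*(2+((p:ℝ)+r+1))) + (r+r)*(1*(1+((p:ℝ)+r+1))) := by
  rw [Finset.range_eq_Ico,
    ← Finset.sum_Ico_consecutive (fun k => hfun p r k)
      (by omega : 0 ≤ 2) (by omega : 2 ≤ p+r+r+2),
    ← Finset.sum_Ico_consecutive (fun k => hfun p r k)
      (by omega : 2 ≤ p+2) (by omega : p+2 ≤ p+r+r+2),
    sum_Ico_const _ _ _ (((p:ℝ)+r+1)*(((p:ℝ)+r+1)+((p:ℝ)+r+1)) + p*(((p:ℝ)+r+1)*(((p:ℝ)+r+1)+2))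
          + r*(((p:ℝ)+r+1)*(((p:ℝ)+r+1)+1)))
      (by intro k h1 h2; simp only [hfun]; rw [if_pos (by omega : k < 2)]),
    sum_Ico_const _ _ _ (2*(2+((p:ℝ)+r+1))+2*(2+((p:ℝ)+r+1)))
      (by intro k h1 h2; simp only [hfun]; rw [if_neg (by omega), if_pos (by omega)]),
    sum_Ico_const _ _ _ (1*(1+((p:ℝ)+r+1)))
      (by intro k h1 h2; simp only [hfun]; rw [if_neg (by omega), if_neg (by omega)])]
  have e1 : (2 - 0 : ℕ) = 2 := by omega
  have e2 : (p+2-2 : ℕ) = p := by omega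
  have e3 : (p+r+r+2-(p+2) : ℕ) = r + r := by omega
  rw [e1, e2, e3]
  push_cast
  ring

theorem GGraph_p_r_r_q_one_gt {p r : ℕ} (hp : 2 ≤ p) (hr : 1 ≤ r)
    (q : Fin (p + r + r + 2) → ℝ) (hq : IsEigSeq (sLapMatrix (GGraph p r r)) q)
    (d : Fin (p + r + r + 2) → ℕ) (hd : IsDegSeq (GGraph p r r) d) :
    q ⟨0, by omega⟩ > (d ⟨0, by omega⟩ : ℝ) + 2 := by
  obtain ⟨hqa, hA, σ, hqe⟩ := hq
  obtain ⟨hda, τ, hde⟩ := hd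
  have hev : ∀ j, hA.eigenvalues j ≤ q ⟨0, by omega⟩ := by
    intro j
    have h0 : (⟨0, by omega⟩ : Fin (p+r+r+2)) ≤ σ.symm j := by
      simp [Fin.le_def]
    have h1 := hqa h0
    rw [hqe (σ.symm j), Equiv.apply_symm_apply] at h1
    exact h1
  have hray := rayleigh_le hA hev (fun i : Fin (p+r+r+2) => gfun p r i.val)
  have hxx : (fun i : Fin (p+r+r+2) => gfun p r i.val) ⬝ᵥ
      (fun i : Fin (p+r+r+2) => gfun p r i.val) = 2*((p:ℝ)+r+1)^2 + 4*p + 2*r := by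
    have h2 := Fin.sum_univ_eq_sum_range (fun k => gfun p r k * gfun p r k) (p+r+r+2)
    exact h2.trans (gfun_sq_sum p r hp hr)
  have hqf : (fun i : Fin (p+r+r+2) => gfun p r i.val) ⬝ᵥ
      (sLapMatrix (GGraph p r r) *ᵥ (fun i : Fin (p+r+r+2) => gfun p r i.val))
      = ∑ k ∈ Finset.range (p+r+r+2), hfun p r k := by
    have hstep : (fun i : Fin (p+r+r+2) => gfun p r i.val) ⬝ᵥ
        (sLapMatrix (GGraph p r r) *ᵥ (fun i : Fin (p+r+r+2) => gfun p r i.val))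
        = ∑ i : Fin (p+r+r+2), gfun p r i.val *
            ((((GGraph p r r).neighborFinset i).card : ℝ) * gfun p r i.val
              + ∑ u ∈ (GGraph p r r).neighborFinset i, gfun p r u.val) := by
      simp only [dotProduct, sLapMatrix, Matrix.add_mulVec, Pi.add_apply,
        SimpleGraph.degMatrix_mulVec_apply, SimpleGraph.adjMatrix_mulVec_apply,
        SimpleGraph.degree]
    rw [hstep]
    have hptw : ∀ i : Fin (p+r+r+2), gfun p r i.val *
            ((((GGraph p r r).neighborFinset i).card : ℝ) * gfun p r i.val
              + ∑ u ∈ (GGraph p r r).neighborFinset i, gfun p r u.val)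
        = hfun p r i.val := by
      intro i
      rw [← GGraph_inner_sum p r hp hr i]
      have h1 : ∑ u ∈ (GGraph p r r).neighborFinset i,
            gfun p r i.val * (gfun p r i.val + gfun p r u.val)
          = ∑ u ∈ (GGraph p r r).neighborFinset i,
            (gfun p r i.val * gfun p r i.val + gfun p r i.val * gfun p r u.val) := by
        refine Finset.sum_congr rfl fun u _ => ?_
        rw [mul_add]
      rw [h1, Finset.sum_add_distrib, Finset.sum_const, nsmul_eq_mul, mul_add, Finset.mul_sum]
      ring
    rw [Finset.sum_congr rfl (fun i _ => hptw i)]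
    exact Fin.sum_univ_eq_sum_range (fun k => hfun p r k) (p+r+r+2)
  rw [hfun_sum p r hp hr] at hqf
  have hd0 : (d ⟨0, by omega⟩ : ℕ) ≤ p + r + 1 := by
    rw [hde]; exact GGraph_degree_le hp hr _
  have hP : (2:ℝ) ≤ (p:ℝ) := by exact_mod_cast hp
  have hR : (1:ℝ) ≤ (r:ℝ) := by exact_mod_cast hr
  have hxxpos : (0:ℝ) < (fun i : Fin (p+r+r+2) => gfun p r i.val) ⬝ᵥ
      (fun i : Fin (p+r+r+2) => gfun p r i.val) := by
    rw [hxx]; positivity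
  have key : ((p:ℝ)+r+3) * ((fun i : Fin (p+r+r+2) => gfun p r i.val) ⬝ᵥ
      (fun i : Fin (p+r+r+2) => gfun p r i.val))
      < (fun i : Fin (p+r+r+2) => gfun p r i.val) ⬝ᵥ
        (sLapMatrix (GGraph p r r) *ᵥ (fun i : Fin (p+r+r+2) => gfun p r i.val)) := by
    rw [hxx, hqf]
    nlinarith [mul_nonneg (by linarith : (0:ℝ) ≤ (p:ℝ) - 2) (by linarith : (0:ℝ) ≤ (r:ℝ)),
      mul_nonneg (by linarith : (0:ℝ) ≤ (p:ℝ) - 2) (by linarith : (0:ℝ) ≤ (p:ℝ))]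
  have hq0 : ((p:ℝ)+r+3) < q ⟨0, by omega⟩ :=
    lt_of_mul_lt_mul_right (lt_of_lt_of_le key hray) (le_of_lt hxxpos)
  have hcast : ((d ⟨0, by omega⟩ : ℕ) : ℝ) ≤ (p:ℝ) + r + 1 := by exact_mod_cast hd0
  have : ((d ⟨0, by omega⟩ : ℕ) : ℝ) + 2 ≤ (p:ℝ) + r + 3 := by linarith
  linarith
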